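/- Let c be an orthogonal transformation of ℝⁿ with I − c invertible and μ = 2(I−c)⁻¹. If τ is a unit vector then μ(τ) is the unique vector v with R(τ)c(v) = v and v·τ = 1, provided the fixed space of R(τ)c is one-dimensional. -/

import Mathlib

open scoped RealInnerProductSpace

noncomputable section

/-- The reflection in the hyperplane `τ^⊥`, as a linear map:
`R(τ)(x) = x - 2(x·τ)τ`. -/
def reflectL {n : ℕ} (τ : EuclideanSpace ℝ (Fin n)) :
    EuclideanSpace ℝ (Fin n) →ₗ[ℝ] EuclideanSpace ℝ (Fin n) where
  toFun x := x - (2 * ⟪x, τ⟫) • τ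
  map_add' x y := by rw [inner_add_left]; module
  map_smul' r x := by rw [real_inner_smul_left]; simp only [RingHom.id_apply]; module

lemma reflectL_apply {n : ℕ} (τ x : EuclideanSpace ℝ (Fin n)) :
    reflectL τ x = x - (2 * ⟪x, τ⟫) • τ := rfl

/-- Let `c` be an orthogonal transformation of `ℝⁿ` with `I - c` invertible and
`μ = 2 (I - c)⁻¹`.  If `τ` is a unit vector then `μ(τ)` is the unique vector `v`
with `R(τ)(c(v)) = v` and `v·τ = 1`, provided the fixed space of `R(τ) ∘ c` is
one-dimensional. -/
theorem stmt_5 {n : ℕ} (c : EuclideanSpace ℝ (Fin n) ≃ₗᵢ[ℝ] EuclideanSpace ℝ (Fin n))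
    (μ : EuclideanSpace ℝ (Fin n) →ₗ[ℝ] EuclideanSpace ℝ (Fin n))
    (hμ₁ : ∀ x, μ x - c (μ x) = (2 : ℝ) • x)
    (hμ₂ : ∀ x, μ (x - c x) = (2 : ℝ) • x)
    (τ : EuclideanSpace ℝ (Fin n)) (hτ : ‖τ‖ = 1)
    (hfix : Module.finrank ℝ
      (LinearMap.ker (reflectL τ ∘ₗ (c.toLinearEquiv : EuclideanSpace ℝ (Fin n) →ₗ[ℝ] EuclideanSpace ℝ (Fin n))
        - LinearMap.id)) = 1) :
    (reflectL τ (c (μ τ)) = μ τ ∧ ⟪μ τ, τ⟫ = 1) ∧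
      ∀ v, reflectL τ (c v) = v → ⟪v, τ⟫ = 1 → v = μ τ := by
  set w := μ τ with hw
  -- c w = w - 2 τ
  have hcw : c w = w - (2 : ℝ) • τ := by
    have := hμ₁ τ
    rw [← hw] at this
    linear_combination (norm := module) -this
  -- inner product fact
  have hinner : ⟪w, τ⟫ = 1 := by
    have h2 : w - c w = (2 : ℝ) • τ := hμ₁ τ
    have hnc : ⟪c w, c w⟫ = ⟪w, w⟫ := c.inner_map_map w w
    have hττ : ⟪τ, τ⟫ = (1 : ℝ) := by
      rw [real_inner_self_eq_norm_sq, hτ]; norm_num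
    -- expand ‖w - c w‖² = 4
    have hexp : ⟪w - c w, w - c w⟫ = (4 : ℝ) * ⟪τ, τ⟫ := by
      rw [h2, real_inner_smul_left, real_inner_smul_right]; ring
    rw [inner_sub_left, inner_sub_right, inner_sub_right, hnc,
      real_inner_comm (c w) w, hττ] at hexp
    -- hexp : ⟪w,w⟫ - ⟪w,cw⟫ - (⟪w,cw⟫ - ⟪w,w⟫) = 4
    have hsym : ⟪w, c w⟫ = ⟪c w, w⟫ := real_inner_comm (c w) w
    have hwc : ⟪w, w⟫ - ⟪w, c w⟫ = 2 := by linarith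
    have : ⟪w, τ⟫ = (⟪w, w⟫ - ⟪w, c w⟫) / 2 := by
      have : (2:ℝ) * ⟪w, τ⟫ = ⟪w, w - c w⟫ := by
        rw [h2, real_inner_smul_right]
      rw [inner_sub_right] at this
      linarith
    rw [this, hwc]; norm_num
  have hrefl : reflectL τ (c w) = w := by
    rw [hcw, reflectL_apply, inner_sub_left, real_inner_smul_left, hinner,
      real_inner_self_eq_norm_sq, hτ]
    module
  refine ⟨⟨hrefl, hinner⟩, ?_⟩
  intro v hv hvτ
  -- both w and v are in the kernel
  set K := LinearMap.ker (reflectL τ ∘ₗ (c.toLinearEquiv : EuclideanSpace ℝ (Fin n) →ₗ[ℝ] EuclideanSpace ℝ (Fin n))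
    - LinearMap.id) with hK
  have hmem : ∀ x, reflectL τ (c x) = x → x ∈ K := by
    intro x hx
    simp only [hK, LinearMap.mem_ker, LinearMap.sub_apply, LinearMap.comp_apply,
      LinearMap.id_apply, LinearIsometryEquiv.coe_toLinearEquiv, sub_eq_zero]
    exact hx
  have hwK : w ∈ K := hmem w hrefl
  have hvK : v ∈ K := hmem v hv
  obtain ⟨⟨v₀, hv₀K⟩, hv₀ne, hspan⟩ := finrank_eq_one_iff'.mp hfix
  obtain ⟨a, ha⟩ := hspan ⟨w, hwK⟩
  obtain ⟨b, hb⟩ := hspan ⟨v, hvK⟩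
  have ha' : a • v₀ = w := congrArg Subtype.val ha
  have hb' : b • v₀ = v := congrArg Subtype.val hb
  have hav : a * ⟪v₀, τ⟫ = 1 := by rw [← real_inner_smul_left, ha', hinner]
  have hbv : b * ⟪v₀, τ⟫ = 1 := by rw [← real_inner_smul_left, hb', hvτ]
  have hvne : ⟪v₀, τ⟫ ≠ 0 := by
    intro h; rw [h, mul_zero] at hav; exact one_ne_zero hav.symm
  have hab : a = b := mul_right_cancel₀ hvne (hav.trans hbv.symm)
  rw [← hb', ← hab, ha']
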